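/- The Dulmage–Mendelsohn decomposition is independent of the choice of maximum matching: if M and M' are two maximum matchings of a bipartite graph G, then the sets of even, odd, and unreachable vertices defined with respect to M coincide with those defined with respect to M'. -/

import Mathlib

open SimpleGraph

/-- Edges of a list alternate w.r.t. membership in `S`; the flag records whether
the next edge must belong to `S`. -/
def altEdges {V : Type*} (S : Set (Sym2 V)) : Bool → List (Sym2 V) → Prop
  | _, [] => True
  | flag, e :: rest => (e ∈ S ↔ flag = true) ∧ altEdges S (!flag) rest

/-- `v` is reachable from some `M`-unmatched vertex by an alternating path
(starting with a non-matching edge) of even length. -/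
def EvenVtx {V : Type*} (G : SimpleGraph V) (M : G.Subgraph) (v : V) : Prop :=
  ∃ u, u ∉ M.verts ∧ ∃ p : G.Walk u v,
    p.IsPath ∧ altEdges M.edgeSet false p.edges ∧ Even p.length

/-- `v` is reachable from some `M`-unmatched vertex by an alternating path of
odd length. -/
def OddVtx {V : Type*} (G : SimpleGraph V) (M : G.Subgraph) (v : V) : Prop :=
  ∃ u, u ∉ M.verts ∧ ∃ p : G.Walk u v,
    p.IsPath ∧ altEdges M.edgeSet false p.edges ∧ Odd p.length

/-- `v` is not reachable from any `M`-unmatched vertex by an alternating path. -/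
def UnreachableVtx {V : Type*} (G : SimpleGraph V) (M : G.Subgraph) (v : V) : Prop :=
  ∀ u (p : G.Walk u v), u ∉ M.verts → p.IsPath →
    altEdges M.edgeSet false p.edges → False

set_option linter.unusedSectionVars false

namespace DM

/-- flip a bool `n` times -/
def natFlip (n : ℕ) (f : Bool) : Bool := if Even n then f else !f

@[simp] lemma natFlip_zero (f : Bool) : natFlip 0 f = f := by simp [natFlip]

lemma natFlip_succ (n : ℕ) (f : Bool) : natFlip (n+1) f = natFlip n (!f) := by
  by_cases h : Even n <;> simp [natFlip, h, Nat.even_add_one]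

lemma natFlip_two_add (n : ℕ) (f : Bool) : natFlip (n+2) f = natFlip n f := by
  rw [natFlip_succ, natFlip_succ, Bool.not_not]

lemma natFlip_even {n : ℕ} (h : Even n) (f : Bool) : natFlip n f = f := by simp [natFlip, h]

lemma natFlip_odd {n : ℕ} (h : Odd n) (f : Bool) : natFlip n f = !f := by
  simp [natFlip, Nat.not_even_iff_odd.mpr h]

lemma natFlip_natFlip (n : ℕ) (f : Bool) : natFlip n (natFlip n f) = f := by
  rcases Nat.even_or_odd n with h | h
  · simp [natFlip_even h]
  · simp [natFlip_odd h]

variable {V : Type*} {S T : Set (Sym2 V)}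

lemma altEdges_append (l₁ l₂ : List (Sym2 V)) (f : Bool) :
    altEdges S f (l₁ ++ l₂) ↔ altEdges S f l₁ ∧ altEdges S (natFlip l₁.length f) l₂ := by
  induction l₁ generalizing f with
  | nil => simp [altEdges]
  | cons e t ih =>
    show (e ∈ S ↔ f = true) ∧ altEdges S (!f) (t ++ l₂) ↔ _
    rw [ih, List.length_cons, natFlip_succ]
    exact and_assoc.symm

lemma altEdges_congr {l : List (Sym2 V)} (h : ∀ e ∈ l, e ∈ S ↔ e ∈ T) (f : Bool) :
    altEdges S f l → altEdges T f l := by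
  induction l generalizing f with
  | nil => intro; trivial
  | cons e t ih =>
    rintro ⟨h1, h2⟩
    exact ⟨by rw [← h e List.mem_cons_self]; exact h1,
      ih (fun e' he' => h e' (List.mem_cons_of_mem _ he')) _ h2⟩

lemma altEdges_reverse {l : List (Sym2 V)} {f : Bool} (h : altEdges S f l) :
    altEdges S (natFlip (l.length + 1) f) l.reverse := by
  induction l generalizing f with
  | nil => trivial
  | cons e t ih =>
    obtain ⟨h1, h2⟩ := h
    rw [List.reverse_cons, altEdges_append]
    refine ⟨?_, ?_, trivial⟩
    · rw [List.length_cons, natFlip_two_add]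
      have := ih h2
      rwa [natFlip_succ, Bool.not_not] at this
    · rw [List.length_reverse, List.length_cons, natFlip_two_add, natFlip_natFlip]
      exact h1

end DM

set_option linter.unusedSectionVars false
namespace DM
open SimpleGraph Walk

variable {V : Type*} {G : SimpleGraph V} {S : Set (Sym2 V)}
variable {side : V → Bool} [DecidableEq V]

/-- parity of walk length in a bipartite graph is determined by the sides of endpoints -/
lemma walk_parity (hbip : ∀ u v, G.Adj u v → side u ≠ side v) {u v : V} (p : G.Walk u v) : (Even p.length ↔ side u = side v) := by
  induction p with
  | nil => simp
  | @cons u w v h t ih =>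
    have hne := hbip u w h
    rw [Walk.length_cons, Nat.even_add_one, ih]
    cases hsu : side u <;> cases hsw : side w <;> cases hsv : side v <;> simp_all

/-- reduce an alternating walk to an alternating path with the same endpoints and
starting flag (in a bipartite graph) -/
lemma toAltPath (hbip : ∀ u v, G.Adj u v → side u ≠ side v) {u v : V} (p : G.Walk u v) (f : Bool) (halt : altEdges S f p.edges) :
    ∃ q : G.Walk u v, q.IsPath ∧ altEdges S f q.edges := by
  induction p generalizing f with
  | nil => exact ⟨Walk.nil, by simp, trivial⟩
  | @cons u w v h t ih =>
    obtain ⟨h1, h2⟩ := halt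
    obtain ⟨t', ht'path, ht'alt⟩ := ih (!f) h2
    by_cases hu : u ∈ t'.support
    · refine ⟨t'.dropUntil u hu, ht'path.dropUntil hu, ?_⟩
      have hspec := t'.take_spec hu
      have : altEdges S (!f) ((t'.takeUntil u hu).edges ++ (t'.dropUntil u hu).edges) := by
        rw [← Walk.edges_append, hspec]; exact ht'alt
      rw [altEdges_append] at this
      have hodd : Odd (t'.takeUntil u hu).length := by
        rw [Nat.not_even_iff_odd.symm, walk_parity hbip]
        exact fun hss => hbip u w h hss.symm
      have := this.2
      rw [Walk.length_edges] at this
      rwa [natFlip_odd hodd, Bool.not_not] at this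
    · refine ⟨Walk.cons h t', Walk.IsPath.cons ht'path hu, h1, ht'alt⟩

/-- if the walk is a path alternating with starting flag `false`, any edge at the
start vertex is not in `S` -/
lemma start_not_mem_edge {u v : V} {p : G.Walk u v} (hp : p.IsPath)
    (halt : altEdges S false p.edges) {y : V} (hy : s(y, u) ∈ p.edges) : s(y, u) ∉ S := by
  cases p with
  | nil => simp at hy
  | @cons u w v h t =>
    obtain ⟨h1, _⟩ := halt
    rw [Walk.edges_cons, List.mem_cons] at hy
    rcases hy with hy | hy
    · rw [hy]; simpa using h1
    · exact absurd (t.snd_mem_support_of_mem_edges hy) ((Walk.cons_isPath_iff h t).mp hp).2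

/-- the first edge of a nonempty walk alternating with flag `true` is in `S` -/
lemma first_edge_mem {u v : V} {p : G.Walk u v} (hne : ¬ p.Nil)
    (halt : altEdges S true p.edges) :
    ∃ z ∈ p.support, s(u, z) ∈ p.edges ∧ s(u, z) ∈ S := by
  cases p with
  | nil => simp at hne
  | @cons u w v h t =>
    exact ⟨w, by simp, by simp, halt.1.mpr rfl⟩

/-- every internal vertex of an alternating walk is incident to an `S`-edge of the walk -/
lemma internal_partner {u v : V} (p : G.Walk u v) (f : Bool) (halt : altEdges S f p.edges) :
    ∀ y ∈ p.support, y ≠ u → y ≠ v → ∃ z ∈ p.support, s(y, z) ∈ p.edges ∧ s(y, z) ∈ S := by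
  induction p generalizing f with
  | nil => simp
  | @cons u a v h t ih =>
    obtain ⟨h1, h2⟩ := halt
    intro y hy hyu hyv
    rw [Walk.support_cons, List.mem_cons] at hy
    rcases hy with rfl | hy
    · exact absurd rfl hyu
    · by_cases hya : y = a
      · subst hya
        cases t with
        | nil => exact absurd rfl hyv
        | @cons a b v h' t'' =>
          obtain ⟨h1', _⟩ := h2
          cases f with
          | true =>
            exact ⟨u, by simp, by simp [Sym2.eq_swap], by rw [Sym2.eq_swap]; exact h1.mpr rfl⟩
          | false =>
            exact ⟨b, by simp, by simp, h1'.mpr rfl⟩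
      · obtain ⟨z, hz, he, hS⟩ := ih (!f) h2 y hy hya hyv
        exact ⟨z, by simp [hz], by simp [he], hS⟩

end DM

namespace DM
open SimpleGraph Walk Subgraph

variable {V : Type*} {G : SimpleGraph V} {M : G.Subgraph}

lemma adj_unique (hM : M.IsMatching) {a b c : V} (h1 : M.Adj a b) (h2 : M.Adj a c) : b = c :=
  ((hM (M.edge_vert h1)).unique h1 h2)

lemma mem_edge_partner (hM : M.IsMatching) {e : Sym2 V} (he : e ∈ M.edgeSet)
    {x y : V} (hxy : M.Adj x y) (hx : x ∈ e) : e = s(x, y) := by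
  induction e with
  | _ a b =>
    rw [Subgraph.mem_edgeSet] at he
    rw [Sym2.mem_iff] at hx
    rcases hx with rfl | rfl
    · rw [adj_unique hM he hxy]
    · rw [Sym2.eq_swap, adj_unique hM he.symm hxy]

/-- flip a matching along two consecutive path edges: remove `s(w1,w2) ∈ M` and add
`s(u,w1) ∉ M`, where `u` is `M`-unmatched. -/
lemma step (hM : M.IsMatching) {u w1 w2 : V} (hu : u ∉ M.verts) (huw : G.Adj u w1)
    (hw : M.Adj w1 w2) :
    ∃ M₁ : G.Subgraph, M₁.IsMatching ∧ M₁.verts = insert u (M.verts \ {w2}) ∧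
      (∀ e : Sym2 V, e ∈ M₁.edgeSet ↔ e = s(u, w1) ∨ (e ∈ M.edgeSet ∧ w2 ∉ e)) := by
  have hw1M : w1 ∈ M.verts := M.edge_vert hw
  have hw2M : w2 ∈ M.verts := M.edge_vert hw.symm
  have huw1 : u ≠ w1 := huw.ne
  have huw2 : u ≠ w2 := fun h => hu (h ▸ hw2M)
  have hw12 : w1 ≠ w2 := (M.adj_sub hw).ne
  refine ⟨⟨insert u (M.verts \ {w2}),
    fun a b => (M.Adj a b ∧ a ≠ w2 ∧ b ≠ w2) ∨ s(a, b) = s(u, w1), ?_, ?_, ?_⟩, ?_, rfl, ?_⟩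
  · rintro a b (⟨h, -, -⟩ | h)
    · exact M.adj_sub h
    · rw [Sym2.eq_iff] at h
      rcases h with ⟨rfl, rfl⟩ | ⟨rfl, rfl⟩
      · exact huw
      · exact huw.symm
  · rintro a b (⟨h, ha, -⟩ | h)
    · exact Set.mem_insert_of_mem _ ⟨M.edge_vert h, ha⟩
    · rw [Sym2.eq_iff] at h
      rcases h with ⟨rfl, rfl⟩ | ⟨rfl, rfl⟩
      · exact Set.mem_insert _ _
      · exact Set.mem_insert_of_mem _ ⟨hw1M, hw12⟩
  · refine ⟨?_⟩; rintro a b (⟨h, ha, hb⟩ | h)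
    · exact Or.inl ⟨h.symm, hb, ha⟩
    · exact Or.inr (by rw [Sym2.eq_swap]; exact h)
  · -- matching
    rintro a ha
    rcases Set.mem_insert_iff.mp ha with rfl | ⟨haM, haw2⟩
    · refine ⟨w1, Or.inr rfl, ?_⟩
      rintro b (⟨h, -, -⟩ | h)
      · exact absurd (M.edge_vert h) hu
      · rw [Sym2.eq_iff] at h
        rcases h with ⟨-, rfl⟩ | ⟨h, -⟩
        · rfl
        · exact absurd h huw1
    · rw [Set.mem_singleton_iff] at haw2
      by_cases ha1 : a = w1
      · subst ha1
        refine ⟨u, Or.inr (Sym2.eq_swap), ?_⟩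
        rintro b (⟨h, -, hb⟩ | h)
        · exact absurd (adj_unique hM h hw) hb
        · rw [Sym2.eq_iff] at h
          rcases h with ⟨rfl, -⟩ | ⟨-, rfl⟩
          · exact absurd rfl huw1.symm
          · rfl
      · obtain ⟨b0, hb0, hb0u⟩ := hM haM
        have hb0w2 : b0 ≠ w2 := by
          rintro rfl
          exact ha1 (adj_unique hM hb0.symm hw.symm)
        refine ⟨b0, Or.inl ⟨hb0, haw2, hb0w2⟩, ?_⟩
        rintro b (⟨h, -, -⟩ | h)
        · exact hb0u b h
        · rw [Sym2.eq_iff] at h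
          rcases h with ⟨rfl, -⟩ | ⟨h, -⟩
          · exact absurd haM hu
          · exact absurd h ha1
  · -- edgeSet characterization
    intro e
    induction e with
    | _ a b =>
      show (M.Adj a b ∧ a ≠ w2 ∧ b ≠ w2) ∨ s(a, b) = s(u, w1) ↔ _
      rw [Subgraph.mem_edgeSet, Sym2.mem_iff]
      constructor
      · rintro (⟨h, ha, hb⟩ | h)
        · exact Or.inr ⟨h, by rintro (rfl | rfl) <;> simp_all⟩
        · exact Or.inl h
      · rintro (h | ⟨h, hw2⟩)
        · exact Or.inr h
        · exact Or.inl ⟨h, fun hh => hw2 (Or.inl hh.symm), fun hh => hw2 (Or.inr hh.symm)⟩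

end DM

namespace DM
open SimpleGraph Walk Subgraph

variable {V : Type*} [Fintype V] {G : SimpleGraph V} {M : G.Subgraph}

lemma descend (hM : M.IsMatching) {u w1 w2 v : V} (h₁ : G.Adj u w1) (h₂ : G.Adj w1 w2)
    (q : G.Walk w2 v) (hp : (Walk.cons h₁ (Walk.cons h₂ q)).IsPath)
    (halt : altEdges M.edgeSet false (Walk.cons h₁ (Walk.cons h₂ q)).edges)
    (hu : u ∉ M.verts) :
    ∃ M₁ : G.Subgraph, M₁.IsMatching ∧ w2 ∉ M₁.verts ∧
      altEdges M₁.edgeSet false q.edges ∧ M₁.verts.ncard = M.verts.ncard ∧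
      M₁.verts = insert u (M.verts \ {w2}) := by
  obtain ⟨hf1, hf2, hfq⟩ := halt
  have hw : M.Adj w1 w2 := Subgraph.mem_edgeSet.mp (hf2.mpr rfl)
  have hqpath : q.IsPath := (((Walk.cons_isPath_iff _ _).mp hp).1.of_cons)
  have huns : u ∉ (Walk.cons h₂ q).support := ((Walk.cons_isPath_iff _ _).mp hp).2
  have hw1ns : w1 ∉ q.support :=
    ((Walk.cons_isPath_iff _ _).mp ((Walk.cons_isPath_iff _ _).mp hp).1).2
  have huq : u ∉ q.support := fun h => huns (by simp [h])
  obtain ⟨M₁, hM₁, hverts, hedge⟩ := step hM hu h₁ hw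
  have hw2M : w2 ∈ M.verts := M.edge_vert hw.symm
  have huw2 : u ≠ w2 := fun h => hu (h ▸ hw2M)
  refine ⟨M₁, hM₁, ?_, ?_, ?_, hverts⟩
  · rw [hverts]
    rintro (h | ⟨-, h⟩)
    · exact huw2 h.symm
    · exact h rfl
  · refine altEdges_congr (fun e he => ?_) _ hfq
    rw [hedge]
    constructor
    · intro heM
      refine Or.inr ⟨heM, fun hw2e => ?_⟩
      have := mem_edge_partner hM heM hw.symm hw2e
      subst this
      exact hw1ns (q.snd_mem_support_of_mem_edges he)
    · rintro (rfl | ⟨heM, -⟩)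
      · exact absurd (q.fst_mem_support_of_mem_edges he) huq
      · exact heM
  · rw [hverts, Set.ncard_insert_of_notMem (fun h => hu h.1 : u ∉ M.verts \ {w2}),
      Set.ncard_diff_singleton_add_one hw2M]

lemma evenSurgery (hM : M.IsMatching) {u v : V} (p : G.Walk u v) (hp : p.IsPath)
    (halt : altEdges M.edgeSet false p.edges) (hu : u ∉ M.verts) (hev : Even p.length) :
    ∃ N : G.Subgraph, N.IsMatching ∧ v ∉ N.verts ∧ N.verts.ncard = M.verts.ncard := by
  obtain ⟨n, hn⟩ : ∃ n, p.length = n := ⟨_, rfl⟩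
  induction n using Nat.strong_induction_on generalizing M u p with
  | _ n ih =>
    cases p with
    | nil => exact ⟨M, hM, hu, rfl⟩
    | @cons u w1 v h₁ t =>
      cases t with
      | nil => simp at hn; subst hn; simp at hev
      | @cons w1 w2 v h₂ q =>
        obtain ⟨M₁, hM₁, hw2, hqalt, hcard, -⟩ := descend hM h₁ h₂ q hp halt hu
        have hqpath : q.IsPath := (((Walk.cons_isPath_iff _ _).mp hp).1.of_cons)
        have hlen : q.length + 2 = n := by simpa [Nat.add_assoc] using hn
        have hev2 : Even (q.length + 2) := by simpa [Walk.length_cons, Nat.add_assoc] using hev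
        obtain ⟨k, hk⟩ := hev2
        obtain ⟨N, hN, hvN, hcard'⟩ := ih q.length (by omega) hM₁ q hqpath hqalt hw2
          ⟨k - 1, by omega⟩ rfl
        exact ⟨N, hN, hvN, hcard'.trans hcard⟩

lemma oddSurgery (hM : M.IsMatching) {u v : V} (p : G.Walk u v) (hp : p.IsPath)
    (halt : altEdges M.edgeSet false p.edges) (hu : u ∉ M.verts) (hv : v ∉ M.verts)
    (hodd : Odd p.length) :
    ∃ N : G.Subgraph, N.IsMatching ∧ N.verts.ncard = M.verts.ncard + 2 := by
  obtain ⟨n, hn⟩ : ∃ n, p.length = n := ⟨_, rfl⟩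
  induction n using Nat.strong_induction_on generalizing M u p with
  | _ n ih =>
    cases p with
    | nil =>
      subst hn
      simp at hodd
    | @cons u w1 v h₁ t =>
      cases t with
      | nil =>
        -- single edge u-v, both unmatched
        refine ⟨M ⊔ G.subgraphOfAdj h₁, ?_, ?_⟩
        · refine hM.sup (IsMatching.subgraphOfAdj h₁) ?_
          rw [hM.support_eq_verts]
          refine Set.disjoint_left.mpr (fun a ha hax => ?_)
          have := (G.subgraphOfAdj h₁).support_subset_verts hax
          rw [subgraphOfAdj_verts] at this
          rcases this with rfl | rfl
          · exact hu ha
          · exact hv ha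
        · rw [Subgraph.verts_sup, subgraphOfAdj_verts]
          have h1 : (M.verts ∪ {u, v}) = insert u (insert v M.verts) := by
            ext x; simp [or_comm]
          rw [h1, Set.ncard_insert_of_notMem (by simp [hu, h₁.ne]),
            Set.ncard_insert_of_notMem hv]
      | @cons w1 w2 v h₂ q =>
        obtain ⟨M₁, hM₁, hw2, hqalt, hcard, hverts⟩ := descend hM h₁ h₂ q hp halt hu
        have hqpath : q.IsPath := (((Walk.cons_isPath_iff _ _).mp hp).1.of_cons)
        have hlen : q.length + 2 = n := by simpa [Nat.add_assoc] using hn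
        have huv : u ≠ v := by
          intro h
          subst h
          exact ((Walk.cons_isPath_iff _ _).mp hp).2 (Walk.end_mem_support _)
        have hvM₁ : v ∉ M₁.verts := by
          rw [hverts]
          rintro (h | ⟨h, -⟩)
          · exact huv h.symm
          · exact hv h
        have hodd2 : Odd (q.length + 2) := by simpa [Walk.length_cons, Nat.add_assoc] using hodd
        obtain ⟨k, hk⟩ := hodd2
        obtain ⟨N, hN, hcard'⟩ := ih q.length (by omega) hM₁ q hqpath hqalt hw2 hvM₁
          ⟨k - 1, by omega⟩ rfl
        rw [hcard] at hcard'
        exact ⟨N, hN, hcard'⟩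

lemma noAugWalk [DecidableEq V] {side : V → Bool} (hbip : ∀ u v, G.Adj u v → side u ≠ side v)
    (hM : M.IsMatching)
    (hle : ∀ N : G.Subgraph, N.IsMatching → N.verts.ncard ≤ M.verts.ncard + 1)
    {u v : V} (p : G.Walk u v) (halt : altEdges M.edgeSet false p.edges)
    (hu : u ∉ M.verts) (hv : v ∉ M.verts) (hodd : Odd p.length) : False := by
  obtain ⟨q, hqpath, hqalt⟩ := toAltPath hbip p false halt
  have hqodd : Odd q.length := by
    rw [← Nat.not_even_iff_odd, walk_parity hbip]
    rw [← Nat.not_even_iff_odd, walk_parity hbip] at hodd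
    exact hodd
  obtain ⟨N, hN, hcard⟩ := oddSurgery hM q hqpath hqalt hu hv hqodd
  have := hle N hN
  omega

end DM

namespace DM
open SimpleGraph Walk Subgraph

variable {V : Type*} [Fintype V] [DecidableEq V] {G : SimpleGraph V}
variable {side : V → Bool}

/-- The key "trace" lemma: if `v` is unmatched by a maximum matching `N`, then `v` is
an even vertex with respect to any matching `M`. We carry an alternating partial path. -/
lemma trace (hbip : ∀ u v, G.Adj u v → side u ≠ side v) {M N : G.Subgraph}
    (hM : M.IsMatching) (hN : N.IsMatching)
    (hle : ∀ K : G.Subgraph, K.IsMatching → K.verts.ncard ≤ N.verts.ncard + 1)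
    {v : V} (hv : v ∉ N.verts) :
    ∀ (n : ℕ) (x : V) (q : G.Walk x v), Fintype.card V ≤ q.length + n → q.IsPath →
      Even q.length → altEdges M.edgeSet false q.edges → altEdges N.edgeSet true q.edges →
      EvenVtx G M v := by
  intro n
  induction n with
  | zero =>
    intro x q hfuel hq _ _ _
    have := hq.length_lt
    omega
  | succ n ihn =>
    intro x q hfuel hq hev haM haN
    by_cases hx : x ∈ M.verts
    · obtain ⟨x1, hx1, -⟩ := hM hx
      have hx1x : x1 ≠ x := (M.adj_sub hx1).ne'
      -- x1 is not on q
      have hx1q : x1 ∉ q.support := by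
        intro hmem
        -- find the M-edge of x1 on q; it must be s(x1, x), contradicting the start flag
        have hedge : s(x1, x) ∈ q.edges := by
          by_cases hx1v : x1 = v
          · subst hx1v
            have hrev : altEdges M.edgeSet true q.reverse.edges := by
              have h' := altEdges_reverse (S := M.edgeSet) haM
              rw [Walk.length_edges, natFlip_odd
                (Even.add_one hev)] at h'
              rw [Walk.edges_reverse]
              exact h'
            have hqnil : ¬ q.Nil := by
              intro hnil
              rw [Walk.nil_iff_length_eq] at hnil
              have : x1 = x := by
                cases q with
                | nil => rfl
                | cons h t => simp [Walk.length_cons] at hnil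
              exact hx1x this
            have hqrnil : ¬ q.reverse.Nil := by
              rw [Walk.nil_iff_length_eq, Walk.length_reverse]
              rw [Walk.nil_iff_length_eq] at hqnil
              exact hqnil
            obtain ⟨z, -, hze, hzS⟩ := first_edge_mem hqrnil hrev
            have hzx : z = x := adj_unique hM (Subgraph.mem_edgeSet.mp hzS) hx1.symm
            subst hzx
            rwa [Walk.edges_reverse, List.mem_reverse] at hze
          · obtain ⟨z, -, hze, hzS⟩ := internal_partner q false haM x1 hmem hx1x hx1v
            have hzx : z = x := adj_unique hM (Subgraph.mem_edgeSet.mp hzS) hx1.symm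
            subst hzx
            exact hze
        exact start_not_mem_edge hq haM hedge (Subgraph.mem_edgeSet.mpr hx1.symm)
      by_cases hx1N : x1 ∈ N.verts
      · obtain ⟨x2, hx2, -⟩ := hN hx1N
        have hx2x1 : x2 ≠ x1 := (N.adj_sub hx2).ne'
        have hx2x : x2 ≠ x := by
          rintro rfl
          -- then N.Adj x x1, so x's N-partner is x1, but x1 is not on q
          cases q with
          | nil => exact hv (N.edge_vert hx2.symm)
          | @cons a b w h t =>
            obtain ⟨z, hzsup, -, hzS⟩ := first_edge_mem (by simp [Walk.not_nil_cons]) haN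
            have : z = x1 := adj_unique hN (Subgraph.mem_edgeSet.mp hzS) hx2.symm
            exact hx1q (this ▸ hzsup)
        have hx2q : x2 ∉ q.support := by
          intro hmem
          by_cases hx2v : x2 = v
          · exact hv (hx2v ▸ N.edge_vert hx2.symm)
          · obtain ⟨z, hzsup, -, hzS⟩ := internal_partner q true haN x2 hmem hx2x hx2v
            have : z = x1 := adj_unique hN (Subgraph.mem_edgeSet.mp hzS) hx2.symm
            exact hx1q (this ▸ hzsup)
        -- extend the path by two edges
        have ha1x : G.Adj x1 x := (M.adj_sub hx1).symm
        have ha21 : G.Adj x2 x1 := (N.adj_sub hx2).symm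
        have hnotM21 : s(x2, x1) ∉ M.edgeSet := fun hmem =>
          hx2x (adj_unique hM (Subgraph.mem_edgeSet.mp hmem).symm hx1.symm)
        have hnotN1x : s(x1, x) ∉ N.edgeSet := by
          intro hmem
          exact hx2x ((adj_unique hN (Subgraph.mem_edgeSet.mp hmem) hx2).symm ▸ rfl)
        refine ihn x2 (Walk.cons ha21 (Walk.cons ha1x q)) ?_ ?_ ?_ ?_ ?_
        · simp only [Walk.length_cons]; omega
        · rw [Walk.cons_isPath_iff, Walk.cons_isPath_iff]
          refine ⟨⟨hq, hx1q⟩, ?_⟩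
          rw [Walk.support_cons, List.mem_cons]
          rintro (h | h)
          · exact hx2x1 h
          · exact hx2q h
        · simp only [Walk.length_cons]
          obtain ⟨k, hk⟩ := hev
          exact ⟨k + 1, by omega⟩
        · exact ⟨iff_of_false hnotM21 (by simp),
            iff_of_true (Subgraph.mem_edgeSet.mpr hx1.symm) rfl, haM⟩
        · exact ⟨iff_of_true (Subgraph.mem_edgeSet.mpr hx2.symm) rfl,
            iff_of_false hnotN1x (by simp), haN⟩
      · -- x1 not matched by N: augmenting walk for N
        exfalso
        have ha1x : G.Adj x1 x := (M.adj_sub hx1).symm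
        have hnotN : s(x1, x) ∉ N.edgeSet := fun hmem =>
          hx1N (N.edge_vert (Subgraph.mem_edgeSet.mp hmem))
        refine noAugWalk hbip hN hle (Walk.cons ha1x q)
          ⟨iff_of_false hnotN (by simp), haN⟩ hx1N hv ?_
        rw [Walk.length_cons]
        obtain ⟨k, hk⟩ := hev
        exact ⟨k, by omega⟩
    · exact ⟨x, hx, q, hq, haM, hev⟩

/-- If a maximum matching misses `v`, then `v` is even w.r.t. any matching `M`. -/
lemma even_of_missed (hbip : ∀ u v, G.Adj u v → side u ≠ side v) {M N : G.Subgraph}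
    (hM : M.IsMatching) (hN : N.IsMatching)
    (hle : ∀ K : G.Subgraph, K.IsMatching → K.verts.ncard ≤ N.verts.ncard + 1)
    {v : V} (hv : v ∉ N.verts) : EvenVtx G M v :=
  trace hbip hM hN hle hv (Fintype.card V) v Walk.nil (by simp) (by simp) (by simp)
    trivial trivial

end DM

namespace DM
open SimpleGraph Walk Subgraph

variable {V : Type*} [Fintype V] [DecidableEq V] {G : SimpleGraph V}
variable {side : V → Bool}

/-- with a maximum matching in a bipartite graph, no vertex is both even and odd -/
lemma not_even_and_odd (hbip : ∀ u v, G.Adj u v → side u ≠ side v) {M : G.Subgraph}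
    (hM : M.IsMatching)
    (hle : ∀ K : G.Subgraph, K.IsMatching → K.verts.ncard ≤ M.verts.ncard + 1)
    {v : V} (he : EvenVtx G M v) (ho : OddVtx G M v) : False := by
  obtain ⟨u0, hu0, p0, hp0, ha0, hev0⟩ := he
  obtain ⟨u1, hu1, p1, hp1, ha1, hod1⟩ := ho
  refine noAugWalk hbip hM hle (p0.append p1.reverse) ?_ hu0 hu1 ?_
  · rw [Walk.edges_append, altEdges_append, Walk.length_edges, natFlip_even hev0]
    refine ⟨ha0, ?_⟩
    have h' := altEdges_reverse (S := M.edgeSet) ha1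
    rw [Walk.length_edges, natFlip_even (Odd.add_one hod1)] at h'
    rw [Walk.edges_reverse]
    exact h'
  · rw [Walk.length_append, Walk.length_reverse]
    obtain ⟨k, hk⟩ := hev0
    obtain ⟨l, hl⟩ := hod1
    exact ⟨k + l, by omega⟩

/-- peel the last edge off a nonempty walk -/
lemma penult {u v : V} (p : G.Walk u v) (hne : ¬ p.Nil) :
    ∃ (w : V) (h : G.Adj w v) (p₀ : G.Walk u w),
      p.edges = p₀.edges ++ [s(w, v)] ∧ p.length = p₀.length + 1 ∧
      (p.IsPath → (p₀.IsPath ∧ v ∉ p₀.support)) := by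
  have hne' : ¬ p.reverse.Nil := by
    rw [Walk.nil_iff_length_eq, Walk.length_reverse, ← Walk.nil_iff_length_eq]
    exact hne
  cases hpr : p.reverse with
  | nil => rw [hpr] at hne'; simp at hne'
  | @cons a w b h r =>
    refine ⟨w, h.symm, r.reverse, ?_, ?_, ?_⟩
    · have : p.edges.reverse = s(v, w) :: r.edges := by
        rw [← Walk.edges_reverse, hpr, Walk.edges_cons]
      have h2 : p.edges = (s(v, w) :: r.edges).reverse := by
        rw [← this, List.reverse_reverse]
      rw [h2, List.reverse_cons, Walk.edges_reverse, Sym2.eq_swap]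
    · have : p.length = p.reverse.length := (Walk.length_reverse p).symm
      rw [this, hpr, Walk.length_cons, Walk.length_reverse]
    · intro hp
      have : (Walk.cons h r).IsPath := hpr ▸ hp.reverse
      rw [Walk.cons_isPath_iff] at this
      exact ⟨this.1.reverse, by rw [Walk.support_reverse, List.mem_reverse]; exact this.2⟩

/-- transfer of oddness, given transfer of evenness in both directions -/
lemma odd_transfer (hbip : ∀ u v, G.Adj u v → side u ≠ side v) {M M' : G.Subgraph}
    (hM : M.IsMatching) (hM' : M'.IsMatching)
    (hle : ∀ K : G.Subgraph, K.IsMatching → K.verts.ncard ≤ M.verts.ncard + 1)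
    (heven : ∀ w, EvenVtx G M w ↔ EvenVtx G M' w)
    {v : V} (ho : OddVtx G M v) : OddVtx G M' v := by
  obtain ⟨u, hu, p, hp, ha, hod⟩ := ho
  have hne : ¬ p.Nil := by
    rw [Walk.nil_iff_length_eq]
    intro h
    rw [h] at hod
    simp at hod
  obtain ⟨w, hwv, p₀, hED, hL, hPP⟩ := penult p hne
  obtain ⟨hp₀, hvp₀⟩ := hPP hp
  rw [hL] at hod
  have hev₀ : Even p₀.length := by
    rcases Nat.even_or_odd p₀.length with h | h
    · exact h
    · exact absurd hod (by simp [Nat.even_add_one, Nat.not_even_iff_odd.mpr h])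
  have ha₀ : altEdges M.edgeSet false p₀.edges := by
    rw [hED, altEdges_append] at ha
    exact ha.1
  have hlast : s(w, v) ∉ M.edgeSet := by
    rw [hED, altEdges_append, Walk.length_edges, natFlip_even hev₀] at ha
    simpa using ha.2.1
  -- w is even w.r.t. M, hence w.r.t. M'
  have hwEv' : EvenVtx G M' w := (heven w).mp ⟨u, hu, p₀, hp₀, ha₀, hev₀⟩
  obtain ⟨u', hu', P, hP, haP, hevP⟩ := hwEv'
  by_cases hMwv : s(w, v) ∈ M'.edgeSet
  · -- the last edge of P must be s(v, w); drop it
    have hPne : ¬ P.Nil := by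
      intro hnil
      have : u' = w := by
        cases P with
        | nil => rfl
        | cons h t => simp [Walk.not_nil_cons] at hnil
      exact hu' (this ▸ M'.edge_vert (Subgraph.mem_edgeSet.mp hMwv))
    obtain ⟨z, hzw, P₀, hED', hL', hPP'⟩ := penult P hPne
    obtain ⟨hP₀, hwP₀⟩ := hPP' hP
    have hodd₀ : Odd P₀.length := by
      rw [hL'] at hevP
      rcases Nat.even_or_odd P₀.length with h | h
      · exact absurd hevP (by simp [Nat.even_add_one, Nat.not_odd_iff_even.mpr h])
      · exact h
    have hlast' : s(z, w) ∈ M'.edgeSet := by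
      rw [hED', altEdges_append, Walk.length_edges, natFlip_odd hodd₀] at haP
      simpa using haP.2.1
    have hzv : z = v :=
      adj_unique hM' (Subgraph.mem_edgeSet.mp hlast').symm (Subgraph.mem_edgeSet.mp hMwv)
    subst hzv
    have ha₀' : altEdges M'.edgeSet false P₀.edges := by
      rw [hED', altEdges_append] at haP
      exact haP.1
    exact ⟨u', hu', P₀, hP₀, ha₀', hodd₀⟩
  · by_cases hvP : v ∈ P.support
    · -- v lies on P: take the prefix
      set Q := P.takeUntil v hvP with hQ
      have hQpath : Q.IsPath := hP.takeUntil hvP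
      have hQalt : altEdges M'.edgeSet false Q.edges := by
        have hspec := P.take_spec hvP
        have : altEdges M'.edgeSet false (Q.edges ++ (P.dropUntil v hvP).edges) := by
          rw [← Walk.edges_append, hspec]
          exact haP
        rw [altEdges_append] at this
        exact this.1
      rcases Nat.even_or_odd Q.length with hQev | hQodd
      · -- v would be even w.r.t. M' hence M, contradicting oddness
        exfalso
        refine not_even_and_odd hbip hM hle
          ((heven v).mpr ⟨u', hu', Q, hQpath, hQalt, hQev⟩)
          ⟨u, hu, p, hp, ha, by rw [hL]; exact hod⟩
      · exact ⟨u', hu', Q, hQpath, hQalt, hQodd⟩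
    · -- append the edge (w, v) to P
      have hP' : (Walk.cons hwv.symm P.reverse).IsPath := by
        rw [Walk.cons_isPath_iff]
        exact ⟨hP.reverse, by rw [Walk.support_reverse, List.mem_reverse]; exact hvP⟩
      refine ⟨u', hu', (Walk.cons hwv.symm P.reverse).reverse, hP'.reverse, ?_, ?_⟩
      · rw [Walk.edges_reverse, Walk.edges_cons, List.reverse_cons, Walk.edges_reverse,
          List.reverse_reverse, altEdges_append, natFlip_even (by rwa [Walk.length_edges])]
        refine ⟨haP, ?_, trivial⟩
        rw [Sym2.eq_swap] at hMwv
        simpa using hMwv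
      · rw [Walk.length_reverse, Walk.length_cons, Walk.length_reverse]
        exact Even.add_one hevP

end DM

namespace DM
open SimpleGraph Walk Subgraph

variable {V : Type*} [Fintype V] [DecidableEq V] {G : SimpleGraph V}
variable {side : V → Bool}

lemma even_transfer (hbip : ∀ u v, G.Adj u v → side u ≠ side v) {M M' : G.Subgraph}
    (hM : M.IsMatching) (hM' : M'.IsMatching)
    (hmaxM : ∀ N : G.Subgraph, N.IsMatching → N.verts.ncard ≤ M.verts.ncard)
    {v : V} (h : EvenVtx G M v) : EvenVtx G M' v := by
  obtain ⟨u, hu, p, hp, ha, he⟩ := h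
  obtain ⟨N, hN, hvN, hNcard⟩ := evenSurgery hM p hp ha hu he
  exact even_of_missed hbip hM' hN
    (fun K hK => (hmaxM K hK).trans (by omega)) hvN

lemma unreach_iff {M : G.Subgraph} {v : V} :
    UnreachableVtx G M v ↔ ¬ EvenVtx G M v ∧ ¬ OddVtx G M v := by
  constructor
  · intro h
    exact ⟨fun ⟨u, hu, p, hp, ha, _⟩ => h u p hu hp ha,
      fun ⟨u, hu, p, hp, ha, _⟩ => h u p hu hp ha⟩
  · rintro ⟨hne, hno⟩ u p hu hp ha
    rcases Nat.even_or_odd p.length with h | h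
    · exact hne ⟨u, hu, p, hp, ha, h⟩
    · exact hno ⟨u, hu, p, hp, ha, h⟩

end DM

/-- The Dulmage–Mendelsohn decomposition does not depend on the choice of
maximum matching: the even, odd and unreachable vertex classes coincide for any
two maximum matchings of a bipartite graph. -/
theorem dm_classes_independent_of_matching
    {V : Type*} [Fintype V] (G : SimpleGraph V)
    (side : V → Bool) (hbip : ∀ u v, G.Adj u v → side u ≠ side v)
    (M M' : G.Subgraph) (hM : M.IsMatching) (hM' : M'.IsMatching)
    (hmax : ∀ N : G.Subgraph, N.IsMatching → N.verts.ncard ≤ M.verts.ncard)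
    (hmax' : ∀ N : G.Subgraph, N.IsMatching → N.verts.ncard ≤ M'.verts.ncard) :
    (∀ v, EvenVtx G M v ↔ EvenVtx G M' v) ∧
    (∀ v, OddVtx G M v ↔ OddVtx G M' v) ∧
    (∀ v, UnreachableVtx G M v ↔ UnreachableVtx G M' v) := by
  classical
  have hleM : ∀ K : G.Subgraph, K.IsMatching → K.verts.ncard ≤ M.verts.ncard + 1 :=
    fun K hK => (hmax K hK).trans (Nat.le_succ _)
  have hleM' : ∀ K : G.Subgraph, K.IsMatching → K.verts.ncard ≤ M'.verts.ncard + 1 :=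
    fun K hK => (hmax' K hK).trans (Nat.le_succ _)
  have heven : ∀ v, EvenVtx G M v ↔ EvenVtx G M' v := fun v =>
    ⟨DM.even_transfer hbip hM hM' hmax, DM.even_transfer hbip hM' hM hmax'⟩
  have hodd : ∀ v, OddVtx G M v ↔ OddVtx G M' v := fun v =>
    ⟨DM.odd_transfer hbip hM hM' hleM heven,
     DM.odd_transfer hbip hM' hM hleM' (fun w => (heven w).symm)⟩
  refine ⟨heven, hodd, fun v => ?_⟩
  rw [DM.unreach_iff, DM.unreach_iff, heven v, hodd v]
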